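/- For any graph G and any clique cover C_1,...,C_k of G, the matrix X = kI + A − J with A = Σ_{l=1}^k k·1_{C_l}1_{C_l}^T − kI satisfies X = (1/k)Σ_{l=1}^k (k·1_{C_l} − e)(k·1_{C_l} − e)^T; in particular X is positive semidefinite and (t,A) = (k,A) is feasible for the Lovász theta SDP, so ϑ(G) ≤ χ̄(G) (the clique cover number). -/

import Mathlib

open Matrix Finset

lemma psd_smul_sum {V ι : Type*} [Fintype V] [Fintype ι] (c : ℝ) (hc : 0 ≤ c) (w : ι → V → ℝ) :
    (c • ∑ l, Matrix.vecMulVec (w l) (w l)).PosSemidef := by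
  rw [posSemidef_iff_dotProduct_mulVec]
  constructor
  · ext i j
    simp [conjTranspose_apply, Matrix.smul_apply, Matrix.sum_apply, vecMulVec_apply, mul_comm]
  · intro x
    have hmv : ∀ u : V → ℝ, Matrix.vecMulVec u u *ᵥ x = (u ⬝ᵥ x) • u := by
      intro u; ext i
      simp only [mulVec, dotProduct, vecMulVec_apply, Pi.smul_apply, smul_eq_mul, Finset.sum_mul]
      exact Finset.sum_congr rfl fun j _ => by ring
    have hsum : (∑ l, Matrix.vecMulVec (w l) (w l)) *ᵥ x
        = ∑ l, (w l ⬝ᵥ x) • w l := by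
      simp_rw [← hmv]
      ext i
      simp only [mulVec, dotProduct, Matrix.sum_apply, Finset.sum_mul, Finset.sum_apply]
      apply Finset.sum_comm
    have h : star x ⬝ᵥ ((c • ∑ l, Matrix.vecMulVec (w l) (w l)) *ᵥ x)
        = c * ∑ l, (w l ⬝ᵥ x) * (w l ⬝ᵥ x) := by
      rw [smul_mulVec, dotProduct_smul, hsum, smul_eq_mul]
      congr 1
      simp only [dotProduct, Finset.sum_apply, Pi.smul_apply, smul_eq_mul, Finset.mul_sum,
        Finset.sum_mul, Pi.star_apply, star_trivial]
      rw [Finset.sum_comm]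
      exact Finset.sum_congr rfl fun l _ => Finset.sum_congr rfl fun i _ =>
        Finset.sum_congr rfl fun j _ => by ring
    rw [h]
    exact mul_nonneg hc (Finset.sum_nonneg fun l _ => mul_self_nonneg _)

/-- Indicator function of a finite set. -/
def indFun {V : Type*} [DecidableEq V] (s : Finset V) : V → ℝ :=
  fun v => if v ∈ s then (1 : ℝ) else 0

/-- The feasible values of the Lovász theta SDP for a graph `G`. -/
def thetaFeas {V : Type*} [Fintype V] [DecidableEq V] (G : SimpleGraph V) : Set ℝ :=
  {t : ℝ | ∃ A : Matrix V V ℝ, A.IsSymm ∧ (∀ i : V, A i i = 0) ∧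
    (∀ i j : V, ¬ G.Adj i j → A i j = 0) ∧
    (t • (1 : Matrix V V ℝ) + A - Matrix.of fun _ _ => (1 : ℝ)).PosSemidef}

theorem stmt19 {V : Type*} [Fintype V] [DecidableEq V] {k : ℕ} (hk : 0 < k)
    (G : SimpleGraph V)
    (C : Fin k → Finset V)
    -- C_1, ..., C_k is a clique cover of G: a partition of V into cliques
    (hdisj : ∀ i j : Fin k, i ≠ j → Disjoint (C i) (C j))
    (hcover : ∀ v : V, ∃ l : Fin k, v ∈ C l)
    (hne : ∀ l : Fin k, (C l).Nonempty)
    (hclique : ∀ l : Fin k, G.IsClique (C l : Set V)) :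
    -- with A = Σ_l k·1_{C_l}1_{C_l}ᵀ − kI and X = kI + A − J:
    ((k : ℝ) • (1 : Matrix V V ℝ)
        + ((∑ l : Fin k, (k : ℝ) • Matrix.vecMulVec (indFun (C l)) (indFun (C l)))
            - (k : ℝ) • (1 : Matrix V V ℝ))
        - Matrix.of fun _ _ => (1 : ℝ))
      = (k : ℝ)⁻¹ • ∑ l : Fin k,
          Matrix.vecMulVec (fun v => (k : ℝ) * indFun (C l) v - 1)
            (fun v => (k : ℝ) * indFun (C l) v - 1)
    ∧ ((k : ℝ) • (1 : Matrix V V ℝ)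
        + ((∑ l : Fin k, (k : ℝ) • Matrix.vecMulVec (indFun (C l)) (indFun (C l)))
            - (k : ℝ) • (1 : Matrix V V ℝ))
        - Matrix.of fun _ _ => (1 : ℝ)).PosSemidef
    ∧ (k : ℝ) ∈ thetaFeas G
    ∧ sInf (thetaFeas G) ≤ (k : ℝ) := by
  have hk0 : (k : ℝ) ≠ 0 := Nat.cast_ne_zero.mpr hk.ne'
  -- each vertex lies in exactly one clique
  have hone : ∀ v : V, ∑ l : Fin k, indFun (C l) v = 1 := by
    intro v
    obtain ⟨l₀, hl₀⟩ := hcover v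
    rw [Finset.sum_eq_single l₀]
    · simp [indFun, hl₀]
    · intro l _ hl
      have hv : v ∉ C l := fun hv => (hdisj l l₀ hl).forall_ne_finset hv hl₀ rfl
      simp [indFun, hv]
    · simp
  -- the main matrix identity
  have heq : ((k : ℝ) • (1 : Matrix V V ℝ)
        + ((∑ l : Fin k, (k : ℝ) • Matrix.vecMulVec (indFun (C l)) (indFun (C l)))
            - (k : ℝ) • (1 : Matrix V V ℝ))
        - Matrix.of fun _ _ => (1 : ℝ))
      = (k : ℝ)⁻¹ • ∑ l : Fin k,
          Matrix.vecMulVec (fun v => (k : ℝ) * indFun (C l) v - 1)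
            (fun v => (k : ℝ) * indFun (C l) v - 1) := by
    ext i j
    simp only [Matrix.add_apply, Matrix.sub_apply, Matrix.smul_apply, Matrix.sum_apply,
      vecMulVec_apply, Matrix.of_apply, smul_eq_mul]
    have expand : ∑ l : Fin k, ((k : ℝ) * indFun (C l) i - 1) * ((k : ℝ) * indFun (C l) j - 1)
        = (k : ℝ) * (k : ℝ) * (∑ l : Fin k, indFun (C l) i * indFun (C l) j)
          - (k : ℝ) * (∑ l : Fin k, indFun (C l) i)
          - (k : ℝ) * (∑ l : Fin k, indFun (C l) j) + (k : ℝ) := by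
      have step : ∀ l : Fin k, ((k : ℝ) * indFun (C l) i - 1) * ((k : ℝ) * indFun (C l) j - 1)
          = (k : ℝ) * (k : ℝ) * (indFun (C l) i * indFun (C l) j)
            - (k : ℝ) * indFun (C l) i - (k : ℝ) * indFun (C l) j + 1 := fun l => by ring
      rw [Finset.sum_congr rfl fun l _ => step l, Finset.sum_add_distrib,
        Finset.sum_sub_distrib, Finset.sum_sub_distrib, ← Finset.mul_sum, ← Finset.mul_sum,
        ← Finset.mul_sum, Finset.sum_const, Finset.card_univ, Fintype.card_fin,
        nsmul_eq_mul, mul_one]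
    rw [expand, hone i, hone j, ← Finset.mul_sum]
    field_simp
    ring
  have hfeas : (k : ℝ) ∈ thetaFeas G := by
    refine ⟨(∑ l : Fin k, (k : ℝ) • Matrix.vecMulVec (indFun (C l)) (indFun (C l)))
        - (k : ℝ) • (1 : Matrix V V ℝ), ?_, ?_, ?_, ?_⟩
    · unfold Matrix.IsSymm
      ext i j
      simp [Matrix.transpose_apply, Matrix.sub_apply, Matrix.smul_apply, Matrix.sum_apply,
        vecMulVec_apply, Matrix.one_apply, mul_comm, eq_comm]
    · intro i
      have : ∑ l : Fin k, (k : ℝ) * (indFun (C l) i * indFun (C l) i)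
          = (k : ℝ) * ∑ l : Fin k, indFun (C l) i := by
        rw [Finset.mul_sum]
        refine Finset.sum_congr rfl fun l _ => ?_
        have : indFun (C l) i * indFun (C l) i = indFun (C l) i := by
          unfold indFun; split <;> simp
        rw [this]
      simp only [Matrix.sub_apply, Matrix.sum_apply, Matrix.smul_apply, vecMulVec_apply,
        Matrix.one_apply_eq, smul_eq_mul, mul_one]
      rw [show (∑ l : Fin k, (k:ℝ) * (indFun (C l) i * indFun (C l) i)) = _ from this, hone i]
      ring
    · intro i j hadj
      rcases eq_or_ne i j with rfl | hij
      · -- diagonal case as above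
        have : ∑ l : Fin k, (k : ℝ) * (indFun (C l) i * indFun (C l) i)
            = (k : ℝ) * ∑ l : Fin k, indFun (C l) i := by
          rw [Finset.mul_sum]
          refine Finset.sum_congr rfl fun l _ => ?_
          have h2 : indFun (C l) i * indFun (C l) i = indFun (C l) i := by
            unfold indFun; split <;> simp
          rw [h2]
        simp only [Matrix.sub_apply, Matrix.sum_apply, Matrix.smul_apply, vecMulVec_apply,
          Matrix.one_apply_eq, smul_eq_mul, mul_one]
        rw [show (∑ l : Fin k, (k:ℝ) * (indFun (C l) i * indFun (C l) i)) = _ from this, hone i]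
        ring
      · have hzero : ∀ l : Fin k, indFun (C l) i * indFun (C l) j = 0 := by
          intro l
          by_cases hi : i ∈ C l
          · by_cases hj : j ∈ C l
            · exact absurd ((hclique l) (by exact_mod_cast hi) (by exact_mod_cast hj) hij) hadj
            · simp [indFun, hj]
          · simp [indFun, hi]
        simp [Matrix.sub_apply, Matrix.sum_apply, Matrix.smul_apply, vecMulVec_apply,
          Matrix.one_apply_ne hij, hzero]
    · rw [heq]
      exact psd_smul_sum _ (by positivity) _
  refine ⟨heq, ?_, hfeas, ?_⟩
  · rw [heq]
    exact psd_smul_sum _ (by positivity) _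
  · -- sInf ≤ k
    have hbdd : BddBelow (thetaFeas G) := by
      obtain ⟨v, hv⟩ := hne ⟨0, hk⟩
      refine ⟨1, fun t ht => ?_⟩
      obtain ⟨A, hsymm, hdiag, hsupp, hpsd⟩ := ht
      have := hpsd.dotProduct_mulVec_nonneg (Pi.single v 1)
      have hcomp : star (Pi.single v (1:ℝ)) ⬝ᵥ
          ((t • (1 : Matrix V V ℝ) + A - Matrix.of fun _ _ => (1 : ℝ)) *ᵥ Pi.single v 1)
          = t - 1 := by
        simp [dotProduct, mulVec, Matrix.sub_apply, Matrix.add_apply, Matrix.smul_apply,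
          Matrix.one_apply, Pi.single_apply, hdiag v]
      rw [hcomp] at this
      linarith
    exact csInf_le hbdd hfeas
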